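/- For every compact set K ⊂ ℂ, the set {F ∈ X(K) : the images of the elements of F are pairwise disjoint} is a Borel subset of the metric space (X(K), d_X). -/
import Mathlib


noncomputable section

open Set Filter Metric MeasureTheory
open scoped Classical

/-- A loop: a continuous `1`-periodic map `ℝ → ℂ`, viewed as a continuous map from the
circle `S¹ = ℝ/ℤ` to the complex plane. -/
structure Loop where
  toFun : ℝ → ℂ
  continuous_toFun : Continuous toFun
  periodic_toFun : Function.Periodic toFun 1

/-- Lifts of orientation-preserving homeomorphisms of the circle `ℝ/ℤ`: continuous strictly
increasing maps of `ℝ` commuting with translation by `1`. -/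
def CircleMaps : Set (ℝ → ℝ) :=
  {φ | Continuous φ ∧ StrictMono φ ∧ ∀ t, φ (t + 1) = φ t + 1}

/-- The supremum distance between loops, up to orientation-preserving reparametrization:
`d_Γ(γ, γ') = inf_{φ,ψ} sup_t |γ(φ t) - γ'(ψ t)|`. -/
def dGamma (γ γ' : Loop) : ℝ :=
  sInf {r : ℝ | 0 ≤ r ∧ ∃ φ ∈ CircleMaps, ∃ ψ ∈ CircleMaps,
    ∀ t : ℝ, dist (γ.toFun (φ t)) (γ'.toFun (ψ t)) ≤ r}

/-- Loops at `d_Γ`-distance zero are identified. -/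
def loopRel (γ γ' : Loop) : Prop := dGamma γ γ' = 0

/-- The space `Γ₀` of loop classes: loops modulo the relation `d_Γ = 0`. -/
def LoopClass : Type := Quot loopRel

/-- The class of a loop in `Γ₀`. -/
def Loop.cls (γ : Loop) : LoopClass := Quot.mk loopRel γ

namespace LoopClass

/-- The image of a loop class (all representatives have the same image). -/
def image (c : LoopClass) : Set ℂ := ⋃ γ ∈ {γ : Loop | γ.cls = c}, Set.range γ.toFun

/-- The diameter of a loop class. -/
def diam (c : LoopClass) : ℝ := Metric.diam c.image

/-- A loop class is trivial if its image is a single point. -/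
def IsTrivial (c : LoopClass) : Prop := ∃ z : ℂ, c.image = {z}

/-- A loop class is simple if it has an injective representative. -/
def IsSimple (c : LoopClass) : Prop :=
  ∃ γ : Loop, γ.cls = c ∧ ∀ s t : ℝ, s ∈ Set.Ico (0:ℝ) 1 → t ∈ Set.Ico (0:ℝ) 1 →
    γ.toFun s = γ.toFun t → s = t

/-- The induced distance `d_Γ` on loop classes. -/
def dist (c c' : LoopClass) : ℝ :=
  sInf {r : ℝ | ∃ γ γ' : Loop, γ.cls = c ∧ γ'.cls = c' ∧ dGamma γ γ' ≤ r}

end LoopClass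

/-- The space `X(K)` of at most countable, locally finite collections of nontrivial loop
classes with images contained in `K`. -/
def LoopCollections (K : Set ℂ) : Set (Set LoopClass) :=
  {F | F.Countable ∧ (∀ c ∈ F, ¬ c.IsTrivial ∧ c.image ⊆ K) ∧
    ∀ ε : ℝ, 0 < ε → {c ∈ F | ε < c.diam}.Finite}

/-- A partial matching between the collections `F` and `G`: a set of pairs in which every
element of `F` and every element of `G` occurs at most once. -/
def IsMatching (F G : Set LoopClass) (π : Set (LoopClass × LoopClass)) : Prop :=
  (∀ p ∈ π, p.1 ∈ F ∧ p.2 ∈ G) ∧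
  (∀ p ∈ π, ∀ q ∈ π, p.1 = q.1 → p = q) ∧
  (∀ p ∈ π, ∀ q ∈ π, p.2 = q.2 → p = q)

/-- The elements of `F` and `G` not matched by `π`. -/
def unmatched (F G : Set LoopClass) (π : Set (LoopClass × LoopClass)) : Set LoopClass :=
  {c ∈ F | ∀ p ∈ π, p.1 ≠ c} ∪ {c ∈ G | ∀ p ∈ π, p.2 ≠ c}

/-- The distance `d_X` between loop collections: the infimum over partial matchings of the
maximum of the matched `d_Γ`-distances and of half the diameters of unmatched loops. -/
def dX (F G : Set LoopClass) : ℝ :=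
  sInf {r : ℝ | 0 ≤ r ∧ ∃ π : Set (LoopClass × LoopClass), IsMatching F G π ∧
    (∀ p ∈ π, LoopClass.dist p.1 p.2 ≤ r) ∧
    ∀ c ∈ unmatched F G π, c.diam / 2 ≤ r}

/-- The space `X(K)`, as a type. -/
def XSpace (K : Set ℂ) : Type := {F : Set LoopClass // F ∈ LoopCollections K}

namespace XSpace

/-- The metric `d_X` on `X(K)`. -/
def dist {K : Set ℂ} (F G : XSpace K) : ℝ := dX F.1 G.1

/-- `d_X`-open subsets of `X(K)`. -/
def IsOpen {K : Set ℂ} (U : Set (XSpace K)) : Prop :=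
  ∀ F ∈ U, ∃ ε : ℝ, 0 < ε ∧ ∀ G : XSpace K, XSpace.dist F G < ε → G ∈ U

/-- The Borel σ-algebra of the metric space `(X(K), d_X)`. -/
instance measurableSpace {K : Set ℂ} : MeasurableSpace (XSpace K) :=
  MeasurableSpace.generateFrom {U | XSpace.IsOpen U}

/-- Bounded `d_X`-continuous real test functions on `X(K)`. -/
def IsBddContinuous {K : Set ℂ} (f : XSpace K → ℝ) : Prop :=
  (∃ M : ℝ, ∀ F, |f F| ≤ M) ∧
  ∀ F : XSpace K, ∀ ε : ℝ, 0 < ε → ∃ ρ : ℝ, 0 < ρ ∧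
    ∀ G : XSpace K, XSpace.dist F G < ρ → |f G - f F| < ε

end XSpace

/-- Weak convergence, as `δ → 0⁺`, of a `δ`-indexed family of Borel measures on
`(X(K), d_X)`: integrals of bounded `d_X`-continuous functions converge. -/
def WeakLimit {K : Set ℂ} (L : ℝ → Measure (XSpace K)) (μ : Measure (XSpace K)) : Prop :=
  ∀ f : XSpace K → ℝ, XSpace.IsBddContinuous f →
    Tendsto (fun δ : ℝ => ∫ F, f F ∂(L δ)) (nhdsWithin 0 (Set.Ioi 0))
      (nhds (∫ F, f F ∂μ))

/-- The Dirac mass at a loop collection (zero if the collection is not an element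
of `X(K)`). -/
def diracAt (K : Set ℂ) (S : Set LoopClass) : Measure (XSpace K) :=
  if h : S ∈ LoopCollections K then Measure.dirac (⟨S, h⟩ : XSpace K) else 0

section DisjointnessAux

open Metric

/-- The defining set of `dGamma`. -/
def djSet (γ γ' : Loop) : Set ℝ :=
  {r : ℝ | 0 ≤ r ∧ ∃ φ ∈ CircleMaps, ∃ ψ ∈ CircleMaps,
    ∀ t : ℝ, dist (γ.toFun (φ t)) (γ'.toFun (ψ t)) ≤ r}

lemma dj_dGamma_def (γ γ' : Loop) : dGamma γ γ' = sInf (djSet γ γ') := rfl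

lemma dj_id_mem : id ∈ CircleMaps :=
  ⟨continuous_id, strictMono_id, fun _ => rfl⟩

lemma dj_circle_surj {φ : ℝ → ℝ} (hφ : φ ∈ CircleMaps) : Function.Surjective φ := by
  obtain ⟨hc, _, hp⟩ := hφ
  have hn : ∀ (t : ℝ) (n : ℕ), φ (t + n) = φ t + n := by
    intro t n
    induction n with
    | zero => simp
    | succ n ih =>
      have : (t + (n + 1 : ℕ) : ℝ) = (t + n) + 1 := by push_cast; ring
      rw [this, hp, ih]; push_cast; ring
  intro y
  obtain ⟨n, hny⟩ := exists_nat_ge |y - φ 0|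
  have h1 : φ (-(n : ℝ)) = φ 0 - n := by
    have := hn (-(n : ℝ)) n
    simp only [neg_add_cancel] at this
    linarith
  have h2 : φ ((n : ℝ)) = φ 0 + n := by simpa using hn 0 n
  have habs := abs_le.1 hny
  have hmem : y ∈ Set.Icc (φ (-(n : ℝ))) (φ ((n : ℝ))) := by
    rw [h1, h2]; constructor <;> linarith
  obtain ⟨t, _, ht⟩ :=
    intermediate_value_Icc (by linarith [n.cast_nonneg (α := ℝ)] : -(n : ℝ) ≤ (n : ℝ))
      hc.continuousOn hmem
  exact ⟨t, ht⟩

lemma dj_range_compact (γ : Loop) : IsCompact (Set.range γ.toFun) := by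
  have h := γ.periodic_toFun.image_Icc one_pos 0
  rw [← h]
  exact isCompact_Icc.image γ.continuous_toFun

lemma dj_range_nonempty (γ : Loop) : (Set.range γ.toFun).Nonempty :=
  ⟨γ.toFun 0, Set.mem_range_self 0⟩

lemma dj_djSet_nonempty (γ γ' : Loop) : (djSet γ γ').Nonempty := by
  have hb : Bornology.IsBounded (Set.range γ.toFun ∪ Set.range γ'.toFun) :=
    ((dj_range_compact γ).union (dj_range_compact γ')).isBounded
  refine ⟨Metric.diam (Set.range γ.toFun ∪ Set.range γ'.toFun), Metric.diam_nonneg,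
    id, dj_id_mem, id, dj_id_mem, fun t => ?_⟩
  exact Metric.dist_le_diam_of_mem hb (Or.inl (Set.mem_range_self _))
    (Or.inr (Set.mem_range_self _))

lemma dj_djSet_bddBelow (γ γ' : Loop) : BddBelow (djSet γ γ') :=
  ⟨0, fun _ hr => hr.1⟩

lemma dj_dGamma_nonneg (γ γ' : Loop) : 0 ≤ dGamma γ γ' :=
  Real.sInf_nonneg (fun _ hr => hr.1)

lemma dj_mem_left {γ γ' : Loop} {r : ℝ} (hr : r ∈ djSet γ γ') :
    ∀ x ∈ Set.range γ.toFun, ∃ y ∈ Set.range γ'.toFun, dist x y ≤ r := by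
  obtain ⟨-, φ, hφ, ψ, hψ, h⟩ := hr
  rintro x ⟨s, rfl⟩
  obtain ⟨t, rfl⟩ := dj_circle_surj hφ s
  exact ⟨γ'.toFun (ψ t), Set.mem_range_self _, h t⟩

lemma dj_mem_right {γ γ' : Loop} {r : ℝ} (hr : r ∈ djSet γ γ') :
    ∀ y ∈ Set.range γ'.toFun, ∃ x ∈ Set.range γ.toFun, dist x y ≤ r := by
  obtain ⟨-, φ, hφ, ψ, hψ, h⟩ := hr
  rintro y ⟨s, rfl⟩
  obtain ⟨t, rfl⟩ := dj_circle_surj hψ s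
  exact ⟨γ.toFun (φ t), Set.mem_range_self _, h t⟩

lemma dj_hausdorff_le_of_mem {γ γ' : Loop} {r : ℝ} (hr : r ∈ djSet γ γ') :
    hausdorffDist (Set.range γ.toFun) (Set.range γ'.toFun) ≤ r :=
  hausdorffDist_le_of_mem_dist hr.1 (dj_mem_left hr) (fun y hy => by
    obtain ⟨x, hx, hxy⟩ := dj_mem_right hr y hy
    exact ⟨x, hx, by rwa [dist_comm]⟩)

lemma dj_range_eq_of_rel {γ γ' : Loop} (h : loopRel γ γ') :
    Set.range γ.toFun = Set.range γ'.toFun := by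
  have key : ∀ (α β : Loop), dGamma α β = 0 →
      ∀ x ∈ Set.range α.toFun, x ∈ Set.range β.toFun := by
    intro α β hαβ x hx
    have hcl : IsClosed (Set.range β.toFun) := (dj_range_compact β).isClosed
    have hne : (Set.range β.toFun).Nonempty := dj_range_nonempty β
    rw [hcl.mem_iff_infDist_zero hne]
    refine le_antisymm ?_ Metric.infDist_nonneg
    refine le_of_forall_pos_le_add fun ε hε => ?_
    have hlt : sInf (djSet α β) < ε := by
      rw [← dj_dGamma_def, hαβ]; exact hε
    obtain ⟨r, hrmem, hrε⟩ :=
      (csInf_lt_iff (dj_djSet_bddBelow α β) (dj_djSet_nonempty α β)).1 hlt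
    obtain ⟨y, hy, hxy⟩ := dj_mem_left hrmem x hx
    calc Metric.infDist x (Set.range β.toFun) ≤ dist x y := Metric.infDist_le_dist_of_mem hy
      _ ≤ r := hxy
      _ ≤ 0 + ε := by linarith
  have h' : dGamma γ γ' = 0 := h
  apply Set.Subset.antisymm
  · exact fun x hx => key γ γ' h' x hx
  · intro y hy
    -- use symmetric transfer through `dj_mem_right`
    have hcl : IsClosed (Set.range γ.toFun) := (dj_range_compact γ).isClosed
    have hne : (Set.range γ.toFun).Nonempty := dj_range_nonempty γ
    rw [hcl.mem_iff_infDist_zero hne]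
    refine le_antisymm ?_ Metric.infDist_nonneg
    refine le_of_forall_pos_le_add fun ε hε => ?_
    have hlt : sInf (djSet γ γ') < ε := by rw [← dj_dGamma_def, h']; exact hε
    obtain ⟨r, hrmem, hrε⟩ :=
      (csInf_lt_iff (dj_djSet_bddBelow γ γ') (dj_djSet_nonempty γ γ')).1 hlt
    obtain ⟨x, hx, hxy⟩ := dj_mem_right hrmem y hy
    calc Metric.infDist y (Set.range γ.toFun) ≤ dist y x := Metric.infDist_le_dist_of_mem hx
      _ ≤ r := by rwa [dist_comm]
      _ ≤ 0 + ε := by linarith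

lemma dj_range_eq_of_eqvGen {a b : Loop} (h : Relation.EqvGen loopRel a b) :
    Set.range a.toFun = Set.range b.toFun := by
  induction h with
  | rel a b hab => exact dj_range_eq_of_rel hab
  | refl a => rfl
  | symm a b _ ih => exact ih.symm
  | trans a b c _ _ ih1 ih2 => exact ih1.trans ih2

lemma dj_range_eq_of_cls {γ γ' : Loop} (h : γ.cls = γ'.cls) :
    Set.range γ.toFun = Set.range γ'.toFun :=
  dj_range_eq_of_eqvGen (Quot.eqvGen_exact h)

lemma dj_image_eq {c : LoopClass} {γ : Loop} (h : γ.cls = c) :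
    c.image = Set.range γ.toFun := by
  apply Set.Subset.antisymm
  · refine Set.iUnion₂_subset fun γ' hγ' => ?_
    have : γ'.cls = γ.cls := hγ'.trans h.symm
    exact le_of_eq (dj_range_eq_of_cls this)
  · exact Set.subset_iUnion₂ (s := fun γ' (_ : γ' ∈ {γ : Loop | γ.cls = c}) =>
      Set.range γ'.toFun) γ h

lemma dj_exists_rep (c : LoopClass) : ∃ γ : Loop, γ.cls = c :=
  Quot.exists_rep c

lemma dj_image_compact (c : LoopClass) : IsCompact c.image := by
  obtain ⟨γ, hγ⟩ := dj_exists_rep c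
  rw [dj_image_eq hγ]
  exact dj_range_compact γ

lemma dj_image_nonempty (c : LoopClass) : c.image.Nonempty := by
  obtain ⟨γ, hγ⟩ := dj_exists_rep c
  rw [dj_image_eq hγ]
  exact dj_range_nonempty γ

lemma dj_clsdist_hausdorff {c c' : LoopClass} {r : ℝ} (h : LoopClass.dist c c' ≤ r) :
    hausdorffDist c.image c'.image ≤ r := by
  refine le_of_forall_pos_le_add fun δ hδ => ?_
  set S : Set ℝ := {r : ℝ | ∃ γ γ' : Loop, γ.cls = c ∧ γ'.cls = c' ∧ dGamma γ γ' ≤ r} with hS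
  obtain ⟨γ₀, hγ₀⟩ := dj_exists_rep c
  obtain ⟨γ₀', hγ₀'⟩ := dj_exists_rep c'
  have hne : S.Nonempty := ⟨dGamma γ₀ γ₀', γ₀, γ₀', hγ₀, hγ₀', le_refl _⟩
  have hbdd : BddBelow S := ⟨0, fun x ⟨γ, γ', _, _, hle⟩ =>
    le_trans (dj_dGamma_nonneg γ γ') hle⟩
  have hlt : sInf S < r + δ := lt_of_le_of_lt h (lt_add_of_pos_right _ hδ)
  obtain ⟨r₁, ⟨γ, γ', hγ, hγ', hle⟩, hr₁⟩ := (csInf_lt_iff hbdd hne).1 hlt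
  have hlt2 : sInf (djSet γ γ') < r + δ := by
    rw [← dj_dGamma_def]; exact lt_of_le_of_lt hle hr₁
  obtain ⟨r₂, hr₂mem, hr₂⟩ :=
    (csInf_lt_iff (dj_djSet_bddBelow γ γ') (dj_djSet_nonempty γ γ')).1 hlt2
  calc hausdorffDist c.image c'.image
      = hausdorffDist (Set.range γ.toFun) (Set.range γ'.toFun) := by
        rw [dj_image_eq hγ, dj_image_eq hγ']
    _ ≤ r₂ := dj_hausdorff_le_of_mem hr₂mem
    _ ≤ r + δ := hr₂.le

lemma dj_hausdorffEdist_ne_top (c c' : LoopClass) :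
    EMetric.hausdorffEdist c.image c'.image ≠ ⊤ :=
  Metric.hausdorffEdist_ne_top_of_nonempty_of_bounded (dj_image_nonempty c)
    (dj_image_nonempty c') (dj_image_compact c).isBounded (dj_image_compact c').isBounded

lemma dj_diam_le (c d : LoopClass) :
    c.diam ≤ d.diam + 2 * hausdorffDist c.image d.image := by
  have fin := dj_hausdorffEdist_ne_top c d
  have hd := dj_image_compact d
  have hdn := dj_image_nonempty d
  have hh := Metric.hausdorffDist_nonneg (s := c.image) (t := d.image)
  have hdd := Metric.diam_nonneg (s := d.image)
  refine Metric.diam_le_of_forall_dist_le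
    (by unfold LoopClass.diam; linarith) fun x hx y hy => ?_
  obtain ⟨x', hx', hxx'⟩ := hd.exists_infDist_eq_dist hdn x
  obtain ⟨y', hy', hyy'⟩ := hd.exists_infDist_eq_dist hdn y
  have h1 : dist x x' ≤ hausdorffDist c.image d.image := by
    rw [← hxx']; exact Metric.infDist_le_hausdorffDist_of_mem hx fin
  have h2 : dist y y' ≤ hausdorffDist c.image d.image := by
    rw [← hyy']; exact Metric.infDist_le_hausdorffDist_of_mem hy fin
  have h3 : dist x' y' ≤ Metric.diam d.image :=
    Metric.dist_le_diam_of_mem hd.isBounded hx' hy'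
  calc dist x y ≤ dist x x' + dist x' y' + dist y' y := dist_triangle4 x x' y' y
    _ ≤ hausdorffDist c.image d.image + Metric.diam d.image
        + hausdorffDist c.image d.image := by
        rw [dist_comm y' y]
        linarith
    _ = d.diam + 2 * hausdorffDist c.image d.image := by unfold LoopClass.diam; ring

lemma dj_diam_pos {c : LoopClass} (h : ¬ c.IsTrivial)
    (hb : Bornology.IsBounded c.image) : 0 < c.diam := by
  rcases lt_or_eq_of_le (Metric.diam_nonneg (s := c.image)) with hlt | heq
  · exact hlt
  · exfalso
    have h0 : Metric.diam c.image = 0 := heq.symm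
    have hed : EMetric.diam c.image = 0 := by
      have hne := hb.ediam_ne_top
      rw [Metric.diam] at h0
      exact (ENNReal.toReal_eq_zero_iff _).1 h0 |>.resolve_right hne
    have hsub : c.image.Subsingleton := EMetric.diam_eq_zero_iff.1 hed
    obtain ⟨z, hz⟩ := dj_image_nonempty c
    exact h ⟨z, hsub.eq_singleton_of_mem hz⟩

lemma dj_matching_empty (F G : Set LoopClass) : IsMatching F G ∅ := by
  refine ⟨?_, ?_, ?_⟩ <;> simp

lemma dj_diam_le_K {K : Set ℂ} (hK : IsCompact K) (F : XSpace K) {c : LoopClass}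
    (hc : c ∈ F.1) : c.diam ≤ Metric.diam K :=
  Metric.diam_mono ((F.2.2.1 c hc).2) hK.isBounded

lemma dj_dX_lt {K : Set ℂ} (hK : IsCompact K) (F G : XSpace K) {ε : ℝ}
    (h : XSpace.dist F G < ε) :
    ∃ r₀ : ℝ, 0 ≤ r₀ ∧ r₀ < ε ∧ ∃ π, IsMatching F.1 G.1 π ∧
      (∀ p ∈ π, LoopClass.dist p.1 p.2 ≤ r₀) ∧
      ∀ c ∈ unmatched F.1 G.1 π, c.diam / 2 ≤ r₀ := by
  set S : Set ℝ := {r : ℝ | 0 ≤ r ∧ ∃ π : Set (LoopClass × LoopClass),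
    IsMatching F.1 G.1 π ∧ (∀ p ∈ π, LoopClass.dist p.1 p.2 ≤ r) ∧
    ∀ c ∈ unmatched F.1 G.1 π, c.diam / 2 ≤ r} with hSdef
  have hne : S.Nonempty := by
    refine ⟨Metric.diam K / 2, by positivity, ∅, dj_matching_empty _ _, by simp, ?_⟩
    intro c hc
    have hcK : c.diam ≤ Metric.diam K := by
      rcases hc with ⟨hcF, -⟩ | ⟨hcG, -⟩
      · exact dj_diam_le_K hK F hcF
      · exact dj_diam_le_K hK G hcG
    linarith
  have hbdd : BddBelow S := ⟨0, fun r hr => hr.1⟩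
  have hlt : sInf S < ε := h
  obtain ⟨r₀, ⟨hr₀0, π, hπ, hmat, hun⟩, hr₀ε⟩ := (csInf_lt_iff hbdd hne).1 hlt
  exact ⟨r₀, hr₀0, hr₀ε, π, hπ, hmat, hun⟩

/-- The basic open sets used to carve out non-disjointness. -/
def djD (K : Set ℂ) (q r : ℝ) : Set (XSpace K) :=
  {F | ∃ c ∈ F.1, ∃ c' ∈ F.1, c ≠ c' ∧ q < c.diam ∧ q < c'.diam ∧
    ∃ z ∈ c.image, Metric.infDist z c'.image < r}

lemma djD_open {K : Set ℂ} (hK : IsCompact K) {q r : ℝ} (hq : 0 < q) :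
    XSpace.IsOpen (djD K q r) := by
  rintro F ⟨c, hcF, c', hc'F, hne, hdc, hdc', z, hz, hzr⟩
  set iz := Metric.infDist z c'.image with hiz
  refine ⟨min (q / 2) (min ((c.diam - q) / 2) (min ((c'.diam - q) / 2) ((r - iz) / 2))),
    lt_min (by linarith) (lt_min (by linarith) (lt_min (by linarith) (by linarith))), ?_⟩
  intro G hG
  obtain ⟨r₀, hr₀0, hr₀ε, π, hπ, hmat, hun⟩ := dj_dX_lt hK F G hG
  have hr₀q : r₀ < q / 2 := lt_of_lt_of_le hr₀ε (min_le_left _ _)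
  have hr₀c : r₀ < (c.diam - q) / 2 :=
    lt_of_lt_of_le hr₀ε ((min_le_right _ _).trans (min_le_left _ _))
  have hr₀c' : r₀ < (c'.diam - q) / 2 :=
    lt_of_lt_of_le hr₀ε ((min_le_right _ _).trans ((min_le_right _ _).trans (min_le_left _ _)))
  have hr₀r : r₀ < (r - iz) / 2 :=
    lt_of_lt_of_le hr₀ε ((min_le_right _ _).trans ((min_le_right _ _).trans (min_le_right _ _)))
  -- c is matched
  have hmc : ∃ p ∈ π, p.1 = c := by
    by_contra hno
    push_neg at hno
    have : c ∈ unmatched F.1 G.1 π := Or.inl ⟨hcF, hno⟩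
    have := hun c this
    linarith
  have hmc' : ∃ p ∈ π, p.1 = c' := by
    by_contra hno
    push_neg at hno
    have : c' ∈ unmatched F.1 G.1 π := Or.inl ⟨hc'F, hno⟩
    have := hun c' this
    linarith
  obtain ⟨p, hp, hp1⟩ := hmc
  obtain ⟨p', hp', hp'1⟩ := hmc'
  set d := p.2 with hd
  set d' := p'.2 with hd'
  have hdG : d ∈ G.1 := (hπ.1 p hp).2
  have hd'G : d' ∈ G.1 := (hπ.1 p' hp').2
  have hdd' : d ≠ d' := by
    intro hEq
    have : p = p' := hπ.2.2 p hp p' hp' hEq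
    exact hne (hp1 ▸ hp'1 ▸ congrArg Prod.fst this)
  have hdist1 : LoopClass.dist c d ≤ r₀ := by
    have := hmat p hp; rwa [hp1] at this
  have hdist2 : LoopClass.dist c' d' ≤ r₀ := by
    have := hmat p' hp'; rwa [hp'1] at this
  have H1 : Metric.hausdorffDist c.image d.image ≤ r₀ := dj_clsdist_hausdorff hdist1
  have H2 : Metric.hausdorffDist c'.image d'.image ≤ r₀ := dj_clsdist_hausdorff hdist2
  -- diameters
  have hdiam_d : q < d.diam := by
    have := dj_diam_le c d
    have hH1' : Metric.hausdorffDist c.image d.image ≤ r₀ := H1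
    nlinarith [Metric.hausdorffDist_nonneg (s := c.image) (t := d.image)]
  have hdiam_d' : q < d'.diam := by
    have := dj_diam_le c' d'
    nlinarith [Metric.hausdorffDist_nonneg (s := c'.image) (t := d'.image)]
  -- the near-intersection point
  have fin1 := dj_hausdorffEdist_ne_top c d
  have fin2 := dj_hausdorffEdist_ne_top c' d'
  have hzd : Metric.infDist z d.image ≤ r₀ :=
    (Metric.infDist_le_hausdorffDist_of_mem hz fin1).trans H1
  obtain ⟨w, hw, hzw⟩ := (dj_image_compact d).exists_infDist_eq_dist (dj_image_nonempty d) z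
  have hzw' : dist z w ≤ r₀ := by rw [← hzw]; exact hzd
  obtain ⟨z', hz', hzz'⟩ :=
    (dj_image_compact c').exists_infDist_eq_dist (dj_image_nonempty c') z
  have hzz'' : dist z z' = iz := hzz'.symm
  have hz'd' : Metric.infDist z' d'.image ≤ r₀ :=
    (Metric.infDist_le_hausdorffDist_of_mem hz' fin2).trans H2
  obtain ⟨w', hw', hz'w'⟩ :=
    (dj_image_compact d').exists_infDist_eq_dist (dj_image_nonempty d') z'
  have hz'w'' : dist z' w' ≤ r₀ := by rw [← hz'w']; exact hz'd'
  refine ⟨d, hdG, d', hd'G, hdd', hdiam_d, hdiam_d', w, hw, ?_⟩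
  have hwd' : Metric.infDist w d'.image ≤ dist w w' := Metric.infDist_le_dist_of_mem hw'
  have htri : dist w w' ≤ dist w z + dist z z' + dist z' w' := dist_triangle4 w z z' w'
  have hwz : dist w z = dist z w := dist_comm w z
  linarith

lemma dj_not_disjoint_of_mem {K : Set ℂ} (hK : IsCompact K) (F : XSpace K) {q : ℚ}
    (hq : 0 < q) (h : ∀ n : ℕ, F ∈ djD K (q : ℝ) (1 / (n + 1 : ℝ))) :
    ∃ c ∈ F.1, ∃ c' ∈ F.1, c ≠ c' ∧ ¬ Disjoint c.image c'.image := by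
  have hfinB : {c ∈ F.1 | (q : ℝ) < c.diam}.Finite := F.2.2.2 (q : ℝ) (by exact_mod_cast hq)
  set Pfin : Finset (LoopClass × LoopClass) :=
    (hfinB.toFinset ×ˢ hfinB.toFinset).filter (fun p => p.1 ≠ p.2) with hPfin
  have key : ∀ n : ℕ, ∃ p : LoopClass × LoopClass, p ∈ Pfin ∧
      ∃ z ∈ p.1.image, Metric.infDist z p.2.image < 1 / (n + 1 : ℝ) := by
    intro n
    obtain ⟨c, hcF, c', hc'F, hne, hdc, hdc', z, hz, hzr⟩ := h n
    refine ⟨(c, c'), ?_, z, hz, hzr⟩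
    rw [hPfin, Finset.mem_filter, Finset.mem_product]
    exact ⟨⟨hfinB.mem_toFinset.2 ⟨hcF, hdc⟩, hfinB.mem_toFinset.2 ⟨hc'F, hdc'⟩⟩, hne⟩
  choose g hg1 hg2 using key
  have : Finite {p // p ∈ Pfin} := inferInstance
  obtain ⟨⟨p, hp⟩, hfib⟩ :=
    Finite.exists_infinite_fiber (fun n => (⟨g n, hg1 n⟩ : {p // p ∈ Pfin}))
  have hfib' : ((fun n => (⟨g n, hg1 n⟩ : {p // p ∈ Pfin})) ⁻¹' {⟨p, hp⟩}).Infinite :=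
    Set.infinite_coe_iff.1 hfib
  -- p is a pair at set-distance zero
  rw [hPfin, Finset.mem_filter, Finset.mem_product] at hp
  obtain ⟨⟨hp1, hp2⟩, hpne⟩ := hp
  have hp1' := hfinB.mem_toFinset.1 hp1
  have hp2' := hfinB.mem_toFinset.1 hp2
  -- minimizer of infDist over the compact image of p.1
  obtain ⟨z₀, hz₀, hmin⟩ := (dj_image_compact p.1).exists_isMinOn (dj_image_nonempty p.1)
    ((Metric.continuous_infDist_pt p.2.image).continuousOn)
  have hz₀0 : Metric.infDist z₀ p.2.image = 0 := by
    refine le_antisymm ?_ Metric.infDist_nonneg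
    refine le_of_forall_pos_le_add fun ε hε => ?_
    obtain ⟨N, hN⟩ := exists_nat_gt (1 / ε)
    obtain ⟨n, hn, hNn⟩ := hfib'.exists_gt N
    have hgn : g n = p := congrArg Subtype.val hn
    have h1n : (1 : ℝ) / (n + 1 : ℝ) < ε := by
      rw [div_lt_iff₀ (by positivity)]
      have hNn' : (N : ℝ) < (n : ℝ) := by exact_mod_cast hNn
      calc (1 : ℝ) = ε * (1 / ε) := by field_simp
        _ ≤ ε * N := by
            have : (1 / ε) ≤ (N : ℝ) := hN.le
            exact mul_le_mul_of_nonneg_left this hε.le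
        _ < ε * (n + 1) := by nlinarith
    obtain ⟨z, hzmem, hzlt⟩ := hg2 n
    rw [hgn] at hzmem hzlt
    have hmz := isMinOn_iff.1 hmin z hzmem
    linarith
  have hz₀mem : z₀ ∈ p.2.image :=
    ((dj_image_compact p.2).isClosed.mem_iff_infDist_zero (dj_image_nonempty p.2)).2 hz₀0
  exact ⟨p.1, hp1'.1, p.2, hp2'.1, hpne,
    Set.not_disjoint_iff.2 ⟨z₀, hz₀, hz₀mem⟩⟩

lemma dj_mem_of_not_disjoint {K : Set ℂ} (hK : IsCompact K) (F : XSpace K)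
    (h : ∃ c ∈ F.1, ∃ c' ∈ F.1, c ≠ c' ∧ ¬ Disjoint c.image c'.image) :
    ∃ q : {q : ℚ // 0 < q}, ∀ n : ℕ, F ∈ djD K ((q : ℚ) : ℝ) (1 / (n + 1 : ℝ)) := by
  obtain ⟨c, hcF, c', hc'F, hne, hnd⟩ := h
  obtain ⟨z, hz, hz'⟩ := Set.not_disjoint_iff.1 hnd
  have hbc : Bornology.IsBounded c.image := hK.isBounded.subset (F.2.2.1 c hcF).2
  have hbc' : Bornology.IsBounded c'.image := hK.isBounded.subset (F.2.2.1 c' hc'F).2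
  have hdc : 0 < c.diam := dj_diam_pos (F.2.2.1 c hcF).1 hbc
  have hdc' : 0 < c'.diam := dj_diam_pos (F.2.2.1 c' hc'F).1 hbc'
  obtain ⟨q, hq0, hqlt⟩ := exists_rat_btwn (lt_min hdc hdc')
  have hq0' : 0 < q := by exact_mod_cast hq0
  refine ⟨⟨q, hq0'⟩, fun n => ?_⟩
  refine ⟨c, hcF, c', hc'F, hne, lt_of_lt_of_le hqlt (min_le_left _ _),
    lt_of_lt_of_le hqlt (min_le_right _ _), z, hz, ?_⟩
  rw [Metric.infDist_zero_of_mem hz']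
  positivity

end DisjointnessAux

/-- For every compact `K ⊂ ℂ`, the set of collections whose loops have
pairwise disjoint images is a Borel subset of `(X(K), d_X)`. -/
theorem disjointness_is_borel (K : Set ℂ) (hK : IsCompact K) :
    MeasurableSet {F : XSpace K |
      ∀ c ∈ F.1, ∀ c' ∈ F.1, c ≠ c' → Disjoint c.image c'.image} := by
  have hEq : {F : XSpace K |
      ∀ c ∈ F.1, ∀ c' ∈ F.1, c ≠ c' → Disjoint c.image c'.image} =
      (⋃ q : {q : ℚ // 0 < q}, ⋂ n : ℕ, djD K ((q : ℚ) : ℝ) (1 / (n + 1 : ℝ)))ᶜ := by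
    ext F
    simp only [Set.mem_compl_iff, Set.mem_iUnion, Set.mem_iInter, Set.mem_setOf_eq]
    constructor
    · rintro hF ⟨q, hq⟩
      obtain ⟨c, hc, c', hc', hne, hnd⟩ := dj_not_disjoint_of_mem hK F q.2 hq
      exact hnd (hF c hc c' hc' hne)
    · intro hF
      by_contra htF
      push_neg at htF
      obtain ⟨c, hc, c', hc', hne, hnd⟩ := htF
      exact hF (dj_mem_of_not_disjoint hK F ⟨c, hc, c', hc', hne, hnd⟩)
  rw [hEq]
  refine (MeasurableSet.iUnion fun q => MeasurableSet.iInter fun n =>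
    MeasurableSpace.measurableSet_generateFrom (djD_open hK (by exact_mod_cast q.2))).compl
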